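/- Define k_3(t) = -S[P^(2t+1)]/2 + S[P^(2t-1)] - S[P^(2t-3)]/2 for t > 1. Then k_3(t) ≥ 0 for all t > 1 and k_3(t) → 0 exponentially as t → ∞, for any fixed 0 < p < 1/2. -/

import Mathlib

open Real Set

open Real Set

noncomputable def Faux (y : ℝ) : ℝ := ((1-y)*Real.log (1-y) + (1+y)*Real.log (1+y))/2

lemma Faux_neg (y : ℝ) : Faux (-y) = Faux y := by
  unfold Faux
  rw [show (1:ℝ) - -y = 1 + y by ring, show (1:ℝ) + -y = 1 - y by ring]
  ring

lemma Faux_zero : Faux 0 = 0 := by simp [Faux]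

lemma Faux_one : Faux 1 = Real.log 2 := by
  unfold Faux
  norm_num

lemma Faux_convex : ConvexOn ℝ (Icc (-1:ℝ) 1) Faux := by
  have e0 : ∀ y : ℝ, (AffineMap.lineMap (1:ℝ) (0:ℝ)) y = 1 - y := by
    intro y; simp [AffineMap.lineMap_apply]; ring
  have e1 : ∀ y : ℝ, (AffineMap.lineMap (1:ℝ) (2:ℝ)) y = 1 + y := by
    intro y; simp [AffineMap.lineMap_apply]; ring
  have h0 := Real.convexOn_mul_log.comp_affineMap (AffineMap.lineMap (1:ℝ) (0:ℝ))
  have h1 := Real.convexOn_mul_log.comp_affineMap (AffineMap.lineMap (1:ℝ) (2:ℝ))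
  have h0' : ConvexOn ℝ (Icc (-1:ℝ) 1) (fun y => (1-y) * Real.log (1-y)) := by
    have hs : Icc (-1:ℝ) 1 ⊆ (AffineMap.lineMap (1:ℝ) (0:ℝ)) ⁻¹' (Ici 0) := by
      intro y hy; simp only [mem_preimage, e0, mem_Ici]; linarith [hy.1, hy.2]
    have h := h0.subset hs (convex_Icc _ _)
    refine h.congr (fun y _ => ?_)
    simp [Function.comp, e0]
  have h1' : ConvexOn ℝ (Icc (-1:ℝ) 1) (fun y => (1+y) * Real.log (1+y)) := by
    have hs : Icc (-1:ℝ) 1 ⊆ (AffineMap.lineMap (1:ℝ) (2:ℝ)) ⁻¹' (Ici 0) := by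
      intro y hy; simp only [mem_preimage, e1, mem_Ici]; linarith [hy.1, hy.2]
    have h := h1.subset hs (convex_Icc _ _)
    refine h.congr (fun y _ => ?_)
    simp [Function.comp, e1]
  have h := (h0'.add h1').smul (by norm_num : (0:ℝ) ≤ 1/2)
  refine h.congr (fun y _ => ?_)
  simp [Faux, smul_eq_mul]; ring

lemma Faux_mono {a b : ℝ} (ha : 0 ≤ a) (hab : a ≤ b) (hb : b ≤ 1) : Faux a ≤ Faux b := by
  rcases eq_or_lt_of_le (ha.trans hab) with h | hbpos
  · have h1 : a = 0 := le_antisymm (hab.trans h.symm.le) ha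
    rw [h1, ← h]
  · have hw1 : (0:ℝ) ≤ (b+a)/(2*b) := div_nonneg (by linarith) (by linarith)
    have hw2 : (0:ℝ) ≤ (b-a)/(2*b) := div_nonneg (by linarith) (by linarith)
    have hsum : (b+a)/(2*b) + (b-a)/(2*b) = 1 := by
      field_simp
      ring
    have hmem1 : b ∈ Icc (-1:ℝ) 1 := ⟨by linarith, hb⟩
    have hmem2 : -b ∈ Icc (-1:ℝ) 1 := ⟨by linarith, by linarith⟩
    have h := Faux_convex.2 hmem1 hmem2 hw1 hw2 hsum
    simp only [smul_eq_mul] at h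
    have hcombo : (b+a)/(2*b) * b + (b-a)/(2*b) * (-b) = a := by
      field_simp
      ring
    rw [hcombo, Faux_neg] at h
    calc Faux a ≤ (b+a)/(2*b) * Faux b + (b-a)/(2*b) * Faux b := h
    _ = Faux b := by rw [← add_mul, hsum, one_mul]

lemma Faux_le {y : ℝ} (h0 : 0 ≤ y) (h1 : y ≤ 1) : Faux y ≤ y * Real.log 2 := by
  have hmem0 : (0:ℝ) ∈ Icc (-1:ℝ) 1 := by norm_num
  have hmem1 : (1:ℝ) ∈ Icc (-1:ℝ) 1 := by norm_num
  have h := Faux_convex.2 hmem1 hmem0 h0 (by linarith : (0:ℝ) ≤ 1 - y) (by ring)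
  simp only [smul_eq_mul, mul_one, mul_zero, add_zero] at h
  rw [Faux_one, Faux_zero] at h
  linarith

lemma Faux_nonneg {y : ℝ} (h0 : 0 ≤ y) (h1 : y ≤ 1) : 0 ≤ Faux y := by
  have := Faux_mono (le_refl 0) h0 h1
  rw [Faux_zero] at this
  exact this

/-- Define `k_3(t) = -S[P^(2t+1)]/2 + S[P^(2t-1)] - S[P^(2t-3)]/2` for `t > 1`. Then
`k_3(t) ≥ 0` for all `t > 1` and `k_3(t) → 0` exponentially as `t → ∞`,
for any fixed `0 < p < 1/2`. -/
theorem stmt_15 (p : ℝ) (hp0 : 0 < p) (hp : p < 1 / 2)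
    (f : ℕ → ℝ) (hf : ∀ n, f n = (1 - (1 - 2 * p) ^ n) / 2)
    (S : ℝ → ℝ) (hS : ∀ q, S q = -q * Real.log q - (1 - q) * Real.log (1 - q))
    (k3 : ℕ → ℝ)
    (hk3 : ∀ t, 1 < t →
        k3 t = -S (f (2 * t + 1)) / 2 + S (f (2 * t - 1)) - S (f (2 * t - 3)) / 2) :
    (∀ t, 1 < t → 0 ≤ k3 t) ∧
      ∃ C > 0, ∃ r : ℝ, 0 < r ∧ r < 1 ∧ ∀ t, 1 < t → |k3 t| ≤ C * r ^ t := by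
  set x : ℝ := 1 - 2 * p with hxdef
  have hx0 : 0 < x := by simp only [hxdef]; linarith
  have hx1 : x < 1 := by simp only [hxdef]; linarith
  -- S (f n) = log 2 - Faux (x ^ n) for n ≥ 1
  have hSF : ∀ n : ℕ, n ≠ 0 → S (f n) = Real.log 2 - Faux (x ^ n) := by
    intro n hn
    have hyp0 : 0 < x ^ n := pow_pos hx0 n
    have hyp1 : x ^ n < 1 := pow_lt_one₀ hx0.le hx1 hn
    rw [hf, hS]
    set y := x ^ n with hy
    rw [show (1:ℝ) - (1 - y) / 2 = (1 + y) / 2 by ring]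
    rw [Real.log_div (by linarith) (by norm_num), Real.log_div (by linarith) (by norm_num)]
    unfold Faux
    ring
  -- key structural facts for t > 1
  have key : ∀ t : ℕ, 1 < t →
      k3 t = Faux (x ^ (2*t-3) * x^4) / 2 + Faux (x ^ (2*t-3)) / 2
        - Faux (x ^ (2*t-3) * x^2) := by
    intro t ht
    have h1 : 2*t+1 = (2*t-3) + 4 := by omega
    have h2 : 2*t-1 = (2*t-3) + 2 := by omega
    rw [hk3 t ht, hSF (2*t+1) (by omega), hSF (2*t-1) (by omega), hSF (2*t-3) (by omega),
      h1, h2, pow_add, pow_add]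
    ring
  have habc : ∀ t : ℕ, 1 < t →
      0 < x ^ (2*t-3) ∧ x ^ (2*t-3) < 1 := fun t ht =>
    ⟨pow_pos hx0 _, pow_lt_one₀ hx0.le hx1 (by omega)⟩
  have hx2 : 0 < x^2 := pow_pos hx0 2
  have hx21 : x^2 < 1 := pow_lt_one₀ hx0.le hx1 (by norm_num)
  have hx4 : 0 < x^4 := pow_pos hx0 4
  have hx41 : x^4 < 1 := pow_lt_one₀ hx0.le hx1 (by norm_num)
  have part1 : ∀ t, 1 < t → 0 ≤ k3 t := by
    intro t ht
    obtain ⟨hc0, hc1⟩ := habc t ht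
    set c := x ^ (2*t-3) with hc
    set a := c * x^4 with ha
    set b := c * x^2 with hb
    have ha0 : 0 < a := by positivity
    have hb0 : 0 < b := by positivity
    have ha1 : a < 1 := by nlinarith
    have hb1 : b < 1 := by nlinarith
    -- AM-GM : b ≤ (a+c)/2
    have hamgm : b ≤ (a + c) / 2 := by nlinarith [sq_nonneg (x^2 - 1), hc0]
    have hm1 : Faux b ≤ Faux ((a+c)/2) := Faux_mono hb0.le hamgm (by linarith)
    have hmem_a : a ∈ Set.Icc (-1:ℝ) 1 := ⟨by linarith, ha1.le⟩
    have hmem_c : c ∈ Set.Icc (-1:ℝ) 1 := ⟨by linarith, hc1.le⟩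
    have hm2 := Faux_convex.2 hmem_a hmem_c (by norm_num : (0:ℝ) ≤ 1/2)
      (by norm_num : (0:ℝ) ≤ 1/2) (by norm_num)
    simp only [smul_eq_mul] at hm2
    rw [show 1/2 * a + 1/2 * c = (a+c)/2 by ring] at hm2
    rw [key t ht]
    have := hm1.trans hm2
    linarith
  refine ⟨part1, Real.log 2 / x^3, by positivity, x^2, hx2, hx21, ?_⟩
  intro t ht
  rw [abs_of_nonneg (part1 t ht), key t ht]
  obtain ⟨hc0, hc1⟩ := habc t ht
  set c := x ^ (2*t-3) with hc
  have ha0 : 0 < c * x^4 := by positivity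
  have ha1 : c * x^4 < 1 := by nlinarith
  have hb0 : 0 < c * x^2 := by positivity
  have hb1 : c * x^2 < 1 := by nlinarith
  have hFa : Faux (c * x^4) ≤ Faux c := Faux_mono ha0.le (by nlinarith) hc1.le
  have hFb : 0 ≤ Faux (c * x^2) := Faux_nonneg hb0.le hb1.le
  have hFc : Faux c ≤ c * Real.log 2 := Faux_le hc0.le hc1.le
  have hCr : Real.log 2 / x^3 * (x^2)^t = c * Real.log 2 := by
    rw [← pow_mul]
    have hxt : x ^ (2*t) = c * x^3 := by
      rw [hc, ← pow_add]; congr 1; omega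
    rw [hxt]
    field_simp
  rw [hCr]
  linarith
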